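/- Let X and Y be infinite pseudocompact Tychonoff spaces such that the product X×Y is pseudocompact. Then there is no continuous linear surjection from C_p(X×Y) onto C_p(X, C_p(Y)); in particular, C_p(X×Y) is not isomorphic to C_p(X, C_p(Y)). -/

import Mathlib

open Filter Topology

set_option linter.unusedVariables false

/-- `C_p(X, E)`: the submodule of `X → E` (with the product, i.e. pointwise, topology)
consisting of all continuous functions from `X` to `E`.  The coerced type `↥(Cp X E)` carries
the subspace topology, i.e. the topology of pointwise convergence. -/
def Cp (X E : Type*) [TopologicalSpace X] [TopologicalSpace E]
    [AddCommGroup E] [Module ℝ E] [ContinuousAdd E] [ContinuousSMul ℝ E] :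
    Submodule ℝ (X → E) where
  carrier := {f | Continuous f}
  add_mem' hf hg := hf.add hg
  zero_mem' := continuous_const
  smul_mem' c f hf := hf.const_smul c

/-- `(c₀)_p`: the space of real sequences converging to `0`, as a submodule of `ℕ → ℝ`;
the coerced type carries the topology of pointwise convergence inherited from `ℝ^ℕ`. -/
def c0p : Submodule ℝ (ℕ → ℝ) where
  carrier := {x | Tendsto x atTop (𝓝 0)}
  add_mem' hx hy := by
    have h := Filter.Tendsto.add hx hy
    rw [zero_add] at h
    exact h
  zero_mem' := tendsto_const_nhds
  smul_mem' c x hx := by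
    have h := Filter.Tendsto.const_smul hx c
    rw [smul_zero] at h
    exact h

/-- A topological vector space `E` contains a complemented copy of `F`: there is a closed
linear subspace `E₁` of `E` which is linearly homeomorphic to `F` and a continuous linear
projection from `E` onto `E₁`. -/
def HasComplementedCopy (E : Type*) [TopologicalSpace E] [AddCommGroup E] [Module ℝ E]
    (F : Type*) [TopologicalSpace F] [AddCommGroup F] [Module ℝ F] : Prop :=
  ∃ E₁ : Submodule ℝ E, IsClosed (E₁ : Set E) ∧ Nonempty (E₁ ≃L[ℝ] F) ∧
    ∃ P : E →L[ℝ] E, Set.range P = (E₁ : Set E) ∧ ∀ x ∈ E₁, P x = x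

/-- A function `f : X × Y → ℝ` is separately continuous. -/
def SepCont {X Y : Type*} [TopologicalSpace X] [TopologicalSpace Y] (f : X × Y → ℝ) : Prop :=
  (∀ x, Continuous fun y => f (x, y)) ∧ (∀ y, Continuous fun x => f (x, y))

/-- `SC_p(X × Y)`: the submodule of `X × Y → ℝ` consisting of all separately continuous
functions; the coerced type carries the topology of pointwise convergence. -/
def SCp (X Y : Type*) [TopologicalSpace X] [TopologicalSpace Y] : Submodule ℝ (X × Y → ℝ) where
  carrier := {f | SepCont f}
  add_mem' hf hg := ⟨fun x => (hf.1 x).add (hg.1 x), fun y => (hf.2 y).add (hg.2 y)⟩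
  zero_mem' := ⟨fun _ => continuous_const, fun _ => continuous_const⟩
  smul_mem' c f hf := ⟨fun x => (hf.1 x).const_smul c, fun y => (hf.2 y).const_smul c⟩

/-- The topology `σ` on `X × Y`: the coarsest topology making every separately continuous
real-valued function on `X × Y` continuous. -/
def sigmaTop (X Y : Type*) [TopologicalSpace X] [TopologicalSpace Y] :
    TopologicalSpace (X × Y) :=
  ⨅ f : {f : X × Y → ℝ // SepCont f}, TopologicalSpace.induced f.1 inferInstance

/-- The action of a finite linear combination `μ = Σ_z μ(z)·δ_z` of Dirac functionals
on a function `f`. -/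
noncomputable def finComboApply {Z : Type*} (μ : Z →₀ ℝ) (f : Z → ℝ) : ℝ :=
  μ.sum fun z a => a * f z

/-- `μ` is a JN-sequence on the topological space `Z`: each `μ n` is a finite linear
combination of Dirac functionals of norm `Σ_z |μ n z| = 1`, and `μ n (f) → 0` for every
continuous `f : Z → ℝ`. -/
def IsJNSeq (Z : Type*) [TopologicalSpace Z] (μ : ℕ → Z →₀ ℝ) : Prop :=
  (∀ n, ((μ n).sum fun _ a => |a|) = 1) ∧
    ∀ f : Z → ℝ, Continuous f → Tendsto (fun n => finComboApply (μ n) f) atTop (𝓝 0)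

/-- `Z` admits a JN-sequence. -/
def HasJNSeq (Z : Type*) [TopologicalSpace Z] : Prop := ∃ μ, IsJNSeq Z μ

/-- A space is pseudocompact if every continuous real-valued function on it is bounded. -/
def Pseudocompact (Z : Type*) [TopologicalSpace Z] : Prop :=
  ∀ f : Z → ℝ, Continuous f → Bornology.IsBounded (Set.range f)

/-- The action of a finite linear combination `Σ_{(x,y)} ν(x,y)·(δ_x ⊗ δ_y)` of tensor
products of Dirac functionals on an element of `C_p(X, C_p(Y))`. -/
noncomputable def tensorApply {X Y : Type*} [TopologicalSpace X] [TopologicalSpace Y]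
    (ν : (X × Y) →₀ ℝ) (f : ↥(Cp X ↥(Cp Y ℝ))) : ℝ :=
  ν.sum fun p a => a * (f.1 p.1).1 p.2

lemma exists_bump {X : Type*} [TopologicalSpace X] [T35Space X] {U : Set X} {x : X}
    (hU : IsOpen U) (hx : x ∈ U) :
    ∃ u : X → ℝ, Continuous u ∧ u x = 1 ∧ ∀ z ∉ U, u z = 0 := by
  obtain ⟨f, hf, hfx, hfK⟩ := CompletelyRegularSpace.completely_regular x Uᶜ hU.isClosed_compl
    (by simpa using hx)
  refine ⟨fun z => 1 - (f z : ℝ), by continuity, by simp [hfx], fun z hz => ?_⟩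
  have : f z = 1 := hfK hz
  simp [this]


lemma step_lemma {X : Type*} [TopologicalSpace X] [T2Space X] {W : Set X}
    (hW : IsOpen W) (hinf : W.Infinite) :
    ∃ U V : Set X, IsOpen U ∧ U.Nonempty ∧ U ⊆ W ∧ IsOpen V ∧ V.Infinite ∧ V ⊆ W
      ∧ Disjoint U V := by
  by_cases h : ∃ x ∈ W, IsOpen ({x} : Set X)
  · obtain ⟨x, hxW, hx⟩ := h
    refine ⟨{x}, W \ {x}, hx, ⟨x, rfl⟩, by simpa using hxW, hW.sdiff isClosed_singleton,
      hinf.diff (Set.finite_singleton x), Set.diff_subset, ?_⟩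
    exact Set.disjoint_left.2 fun a ha hb => hb.2 ha
  · push_neg at h
    have key : ∀ O : Set X, IsOpen O → O ⊆ W → O.Nonempty → O.Infinite := by
      rintro O hO hOW ⟨z, hz⟩
      by_contra hninf
      rw [Set.not_infinite] at hninf
      have hzopen : IsOpen ({z} : Set X) := by
        have heq : ({z} : Set X) = O ∩ (O \ {z})ᶜ := by
          ext a; simp only [Set.mem_singleton_iff, Set.mem_inter_iff, Set.mem_compl_iff,
            Set.mem_diff, not_and, not_not]
          constructor
          · rintro rfl; exact ⟨hz, fun _ => rfl⟩
          · rintro ⟨ha, h2⟩; exact h2 ha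
        rw [heq]
        exact hO.inter ((hninf.diff (t := {z})).isClosed).isOpen_compl
      exact h z (hOW hz) hzopen
    obtain ⟨a, ha, b, hb, hab⟩ := hinf.nontrivial
    obtain ⟨A, B, hA, hB, haA, hbB, hAB⟩ := t2_separation hab
    refine ⟨W ∩ A, W ∩ B, hW.inter hA, ⟨a, ha, haA⟩, Set.inter_subset_left, hW.inter hB,
      key _ (hW.inter hB) Set.inter_subset_left ⟨b, hb, hbB⟩, Set.inter_subset_left,
      hAB.mono Set.inter_subset_right Set.inter_subset_right⟩

lemma exists_disjoint_opens (X : Type*) [TopologicalSpace X] [T2Space X] [Infinite X] :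
    ∃ (U : ℕ → Set X) (x : ℕ → X), (∀ k, IsOpen (U k)) ∧ (∀ k, x k ∈ U k) ∧
      ∀ j k, j ≠ k → Disjoint (U j) (U k) := by
  have hstep : ∀ W : {W : Set X // IsOpen W ∧ W.Infinite},
      ∃ p : Set X × {W : Set X // IsOpen W ∧ W.Infinite},
        IsOpen p.1 ∧ p.1.Nonempty ∧ p.1 ⊆ W.1 ∧ p.2.1 ⊆ W.1 ∧ Disjoint p.1 p.2.1 := by
    rintro ⟨W, hW, hinf⟩
    obtain ⟨U, V, hU, hUne, hUW, hVo, hVinf, hVW, hdisj⟩ := step_lemma hW hinf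
    exact ⟨(U, ⟨V, hVo, hVinf⟩), hU, hUne, hUW, hVW, hdisj⟩
  choose F hF1 hF2 hFU hF3 hF4 using hstep
  let seq : ℕ → {W : Set X // IsOpen W ∧ W.Infinite} :=
    fun n => Nat.rec ⟨Set.univ, isOpen_univ, Set.infinite_univ⟩ (fun _ W => (F W).2) n
  have hseq : ∀ n, seq (n + 1) = (F (seq n)).2 := fun n => rfl
  set U : ℕ → Set X := fun n => (F (seq n)).1 with hUdef
  have hmono : ∀ j k, j + 1 ≤ k → (seq k).1 ⊆ (seq (j+1)).1 := by
    intro j k hjk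
    induction k with
    | zero => exact absurd hjk (by omega)
    | succ m ih =>
      rcases Nat.lt_succ_iff_lt_or_eq.1 (Nat.lt_of_succ_le hjk) with h | h
      · exact ((hseq m ▸ hF3 (seq m)) : ((seq (m+1)).1 ⊆ (seq m).1)).trans (ih h)
      · rw [h]
  have hUsub : ∀ k, U k ⊆ (seq k).1 := fun k => hFU (seq k)
  have hdisjlt : ∀ j k, j < k → Disjoint (U j) (U k) := by
    intro j k hjk
    have h1 : U k ⊆ ((F (seq j)).2 : Set X) :=
      (hUsub k).trans ((hmono j k hjk).trans (by rw [hseq j]))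
    exact (hF4 (seq j)).mono_right h1
  choose x hx using fun k => hF2 (seq k)
  exact ⟨U, x, fun k => hF1 (seq k), hx, fun j k hjk => by
    rcases Nat.lt_or_ge j k with h | h
    · exact hdisjlt j k h
    · exact (hdisjlt k j (by omega)).symm⟩

lemma exists_finset_estimate {Z : Type*} [TopologicalSpace Z] (ψ : ↥(Cp Z ℝ) → ℝ)
    (hψ : Continuous ψ) (hψ0 : ψ 0 = 0) :
    ∃ (I : Finset Z) (ε : ℝ), 0 < ε ∧
      ∀ f : ↥(Cp Z ℝ), (∀ p ∈ I, |(f : Z → ℝ) p| < ε) → |ψ f| < 1 := by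
  have hopen : IsOpen {t : ℝ | |t| < 1} := isOpen_lt continuous_abs continuous_const
  have hmem : {f : ↥(Cp Z ℝ) | |ψ f| < 1} ∈ 𝓝 (0 : ↥(Cp Z ℝ)) :=
    (hopen.preimage hψ).mem_nhds (by simp [hψ0])
  rw [nhds_induced ((↑) : ↥(Cp Z ℝ) → (Z → ℝ)) 0, Filter.mem_comap] at hmem
  obtain ⟨V, hV, hVsub⟩ := hmem
  rw [show ((0 : ↥(Cp Z ℝ)) : Z → ℝ) = 0 from rfl, nhds_pi, Filter.mem_pi] at hV
  obtain ⟨I, hIfin, t, ht, htsub⟩ := hV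
  choose ε hε hball using fun i => Metric.mem_nhds_iff.1 (ht i)
  classical
  refine ⟨hIfin.toFinset, min 1 (if h : hIfin.toFinset.Nonempty
      then hIfin.toFinset.inf' h ε else 1), ?_, ?_⟩
  · rcases em (hIfin.toFinset.Nonempty) with h | h
    · simp only [h, dif_pos]
      exact lt_min one_pos ((Finset.lt_inf'_iff h).2 fun i _ => hε i)
    · simp [h]
  · intro f hf
    apply hVsub
    show (f : Z → ℝ) ∈ V
    apply htsub
    intro i hi
    apply hball i
    have hi' : i ∈ hIfin.toFinset := hIfin.mem_toFinset.2 hi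
    have h2 := hf i hi'
    have h3 : (if h : hIfin.toFinset.Nonempty then hIfin.toFinset.inf' h ε else 1) ≤ ε i := by
      rw [dif_pos ⟨i, hi'⟩]
      exact Finset.inf'_le _ hi'
    simp only [Metric.mem_ball, Real.dist_eq]
    have : ((0 : Z → ℝ) i) = 0 := rfl
    rw [this, sub_zero]
    exact lt_of_lt_of_le h2 ((min_le_right _ _).trans h3)



/-- Let `X` and `Y` be infinite pseudocompact Tychonoff spaces whose
product is pseudocompact.  Then there is no continuous linear surjection from `C_p(X×Y)`
onto `C_p(X, C_p(Y))`; in particular the two spaces are not linearly homeomorphic. -/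
theorem statement4 (X Y : Type*) [TopologicalSpace X] [T35Space X] [Infinite X]
    [TopologicalSpace Y] [T35Space Y] [Infinite Y]
    (hX : Pseudocompact X) (hY : Pseudocompact Y) (hXY : Pseudocompact (X × Y)) :
    (¬ ∃ T : ↥(Cp (X × Y) ℝ) →L[ℝ] ↥(Cp X ↥(Cp Y ℝ)), Function.Surjective T) ∧
      ¬ Nonempty (↥(Cp (X × Y) ℝ) ≃L[ℝ] ↥(Cp X ↥(Cp Y ℝ))) := by
  have main : ¬ ∃ T : ↥(Cp (X × Y) ℝ) →L[ℝ] ↥(Cp X ↥(Cp Y ℝ)), Function.Surjective T := by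
    rintro ⟨T, hsurj⟩
    -- disjoint open families with points
    obtain ⟨U, xx, hUo, hxU, hUd⟩ := exists_disjoint_opens X
    obtain ⟨V, yy, hVo, hyV, hVd⟩ := exists_disjoint_opens Y
    -- bump functions
    choose u hu1 hu2 hu3 using fun k => exists_bump (hUo k) (hxU k)
    choose v hv1 hv2 hv3 using fun k => exists_bump (hVo k) (hyV k)
    have huU : ∀ k z, u k z ≠ 0 → z ∈ U k := fun k z h => by
      by_contra hz; exact h (hu3 k z hz)
    have hvV : ∀ k z, v k z ≠ 0 → z ∈ V k := fun k z h => by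
      by_contra hz; exact h (hv3 k z hz)
    have huuniq : ∀ (x : X), (∃ k₀, ∀ j, j ≠ k₀ → u j x = 0) ∨ (∀ j, u j x = 0) := by
      intro x
      by_cases hex : ∃ k, u k x ≠ 0
      · obtain ⟨k₀, hk₀⟩ := hex
        refine Or.inl ⟨k₀, fun j hj => ?_⟩
        by_contra hj0
        exact (hUd j k₀ hj).ne_of_mem (huU j x hj0) (huU k₀ x hk₀) rfl
      · push_neg at hex; exact Or.inr hex
    have hvuniq : ∀ (y : Y), (∃ k₀, ∀ j, j ≠ k₀ → v j y = 0) ∨ (∀ j, v j y = 0) := by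
      intro y
      by_cases hex : ∃ k, v k y ≠ 0
      · obtain ⟨k₀, hk₀⟩ := hex
        refine Or.inl ⟨k₀, fun j hj => ?_⟩
        by_contra hj0
        exact (hVd j k₀ hj).ne_of_mem (hvV j y hj0) (hvV k₀ y hk₀) rfl
      · push_neg at hex; exact Or.inr hex
    -- the interpolation functions
    set gf : (ℕ → ℝ) → X → Y → ℝ := fun c x y => ∑' k, c k * (u k x * v k y) with hgf
    have hcy : ∀ (c : ℕ → ℝ) (x : X), Continuous (fun y => gf c x y) := by
      intro c x
      rcases huuniq x with ⟨k₀, hk₀⟩ | hall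
      · have heq : ∀ y, gf c x y = c k₀ * (u k₀ x * v k₀ y) := fun y =>
          tsum_eq_single k₀ (fun j hj => by rw [hk₀ j hj]; ring)
        exact (continuous_const.mul (continuous_const.mul (hv1 k₀))).congr
          fun y => (heq y).symm
      · have heq : ∀ y, gf c x y = 0 := fun y => by
          have := tsum_eq_single (L := SummationFilter.unconditional ℕ) (f := fun k => c k * (u k x * v k y)) 0
            (fun j _ => by simp [hall j])
          rw [hgf]; simp only []; rw [this]; simp [hall 0]
        exact continuous_const.congr fun y => (heq y).symm
    have hcx : ∀ (c : ℕ → ℝ) (y : Y), Continuous (fun x => gf c x y) := by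
      intro c y
      rcases hvuniq y with ⟨k₀, hk₀⟩ | hall
      · have heq : ∀ x, gf c x y = c k₀ * (u k₀ x * v k₀ y) := fun x =>
          tsum_eq_single k₀ (fun j hj => by rw [hk₀ j hj]; ring)
        exact (continuous_const.mul ((hu1 k₀).mul continuous_const)).congr
          fun x => (heq x).symm
      · have heq : ∀ x, gf c x y = 0 := fun x => by
          have := tsum_eq_single (L := SummationFilter.unconditional ℕ) (f := fun k => c k * (u k x * v k y)) 0
            (fun j _ => by simp [hall j])
          rw [hgf]; simp only []; rw [this]; simp [hall 0]
        exact continuous_const.congr fun x => (heq x).symm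
    have hval : ∀ (c : ℕ → ℝ) (k : ℕ), gf c (xx k) (yy k) = c k := by
      intro c k
      have h1 : gf c (xx k) (yy k) = c k * (u k (xx k) * v k (yy k)) :=
        tsum_eq_single k (fun j hj => by
          have : u j (xx k) = 0 := by
            apply hu3
            exact fun hmem => (hUd j k hj).ne_of_mem hmem (hxU k) rfl
          rw [this]; ring)
      rw [h1, hu2, hv2]; ring
    set gel : (ℕ → ℝ) → ↥(Cp X ↥(Cp Y ℝ)) := fun c =>
      ⟨fun x => ⟨fun y => gf c x y, hcy c x⟩, by
        apply Continuous.subtype_mk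
        exact continuous_pi fun y => hcx c y⟩ with hgel
    -- evaluation functionals transported through T
    set ψ : ℕ → ↥(Cp (X × Y) ℝ) → ℝ := fun k f =>
      ((T f : X → ↥(Cp Y ℝ)) (xx k) : Y → ℝ) (yy k) with hψ
    have hψcont : ∀ k, Continuous (ψ k) := fun k =>
      (continuous_apply (yy k)).comp (continuous_subtype_val.comp
        ((continuous_apply (xx k)).comp (continuous_subtype_val.comp T.continuous)))
    have hψ0 : ∀ k, ψ k 0 = 0 := by intro k; simp [hψ]
    have hψsmul : ∀ k (r : ℝ) (f : ↥(Cp (X × Y) ℝ)), ψ k (r • f) = r * ψ k f := by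
      intro k r f; simp [hψ]
    -- boundedness estimates
    have hCk : ∀ k, ∃ C : ℝ, 0 < C ∧ ∀ (n : ℕ) (f : ↥(Cp (X × Y) ℝ)),
        (∀ p, |(f : (X × Y) → ℝ) p| ≤ (n : ℝ)) → |ψ k f| ≤ C * ((n : ℝ) + 1) := by
      intro k
      obtain ⟨I, ε, hε, hIe⟩ := exists_finset_estimate (ψ k) (hψcont k) (hψ0 k)
      refine ⟨2 / ε, by positivity, ?_⟩
      intro n f hfn
      set r : ℝ := ε / (2 * ((n : ℝ) + 1)) with hr
      have hrpos : 0 < r := by positivity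
      have hre : r * (2 * ((n : ℝ) + 1)) = ε := by
        rw [hr]; field_simp
      have h1 : ∀ p ∈ I, |((r • f : ↥(Cp (X × Y) ℝ)) : (X × Y) → ℝ) p| < ε := by
        intro p _
        have he : ((r • f : ↥(Cp (X × Y) ℝ)) : (X × Y) → ℝ) p = r * (f : (X × Y) → ℝ) p := by
          simp
        rw [he, abs_mul, abs_of_pos hrpos]
        have h2 : r * |(f : (X × Y) → ℝ) p| ≤ r * (n : ℝ) :=
          mul_le_mul_of_nonneg_left (hfn p) hrpos.le
        have h3 : r * (n : ℝ) < r * (2 * ((n : ℝ) + 1)) := by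
          apply mul_lt_mul_of_pos_left _ hrpos
          have : (0 : ℝ) ≤ (n : ℝ) := Nat.cast_nonneg n
          linarith
        calc r * |(f : (X × Y) → ℝ) p| ≤ r * (n : ℝ) := h2
          _ < r * (2 * ((n : ℝ) + 1)) := h3
          _ = ε := hre
      have h4 := hIe _ h1
      rw [hψsmul, abs_mul, abs_of_pos hrpos] at h4
      have hCr : (2 / ε) * ((n : ℝ) + 1) * r = 1 := by
        rw [hr]; field_simp
      nlinarith [abs_nonneg (ψ k f)]
    choose C hC0 hC using hCk
    -- the diagonal contradiction
    set c : ℕ → ℝ := fun k => C k * ((k : ℝ) + 1) + 1 with hc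
    obtain ⟨f, hf⟩ := hsurj (gel c)
    obtain ⟨R, hR⟩ := (hXY (f : (X × Y) → ℝ) f.2).exists_norm_le
    obtain ⟨n, hn⟩ := exists_nat_ge R
    have hfn : ∀ p, |(f : (X × Y) → ℝ) p| ≤ (n : ℝ) := fun p =>
      le_trans (by simpa [Real.norm_eq_abs] using hR _ (Set.mem_range_self p)) hn
    have h1 := hC n n f hfn
    have h2 : ψ n f = c n := by
      rw [hψ]; simp only []
      rw [hf, hgel]
      exact hval c n
    rw [h2] at h1
    have h3 : 0 < C n * ((n : ℝ) + 1) := by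
      have := hC0 n
      have h0 : (0:ℝ) < (n : ℝ) + 1 := by positivity
      positivity
    have h4 : |c n| = c n := abs_of_pos (by rw [hc]; simp only []; linarith)
    rw [h4, hc] at h1
    simp only [] at h1
    linarith
  exact ⟨main, fun ⟨e⟩ => main ⟨(e : ↥(Cp (X × Y) ℝ) →L[ℝ] ↥(Cp X ↥(Cp Y ℝ))), e.surjective⟩⟩
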